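/- For all real numbers t < T, x, k and all λ in (max(e^x − e^k, 0), e^x), writing Θ = BS^{−1}(t,T,x,k,λ), the second derivative of the inverse Black–Scholes map equals (BS^{−1})″(t,T,x,k,λ) = (Θ⁴(T−t)² − 4(x−k)²) / (4 (e^x φ(d1(t,T,x,k,Θ)) (T−t))² Θ³). -/

import Mathlib

noncomputable section

/-- Standard normal density. -/
def phi (z : ℝ) : ℝ := (Real.sqrt (2 * Real.pi))⁻¹ * Real.exp (-z ^ 2 / 2)

/-- Standard normal cumulative distribution function. -/
def N (y : ℝ) : ℝ := ∫ z in Set.Iic y, phi z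

/-- Black–Scholes auxiliary quantity `d₁`. -/
def d1 (t T x k σ : ℝ) : ℝ :=
  (x - k) / (σ * Real.sqrt (T - t)) + σ * Real.sqrt (T - t) / 2

/-- Black–Scholes auxiliary quantity `d₂`. -/
def d2 (t T x k σ : ℝ) : ℝ :=
  (x - k) / (σ * Real.sqrt (T - t)) - σ * Real.sqrt (T - t) / 2

/-- Black–Scholes call price with log-spot `x`, log-strike `k`,
time to maturity `T - t` and volatility `σ`. -/
def BS (t T x k σ : ℝ) : ℝ :=
  Real.exp x * N (d1 t T x k σ) - Real.exp k * N (d2 t T x k σ)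

/-- Inverse of the Black–Scholes price in the volatility argument on `(0, ∞)`. -/
def BSinv (t T x k l : ℝ) : ℝ := Function.invFunOn (BS t T x k) (Set.Ioi 0) l

open MeasureTheory Set Filter Topology


lemma phi_pos (z : ℝ) : 0 < phi z := by
  apply mul_pos (inv_pos.2 (Real.sqrt_pos.2 (by positivity))) (Real.exp_pos _)

lemma continuous_phi : Continuous phi := by
  unfold phi; fun_prop

lemma phi_eq (z : ℝ) : phi z = (Real.sqrt (2 * Real.pi))⁻¹ * Real.exp (-(1/2) * z ^ 2) := by
  unfold phi; ring_nf

lemma integrable_phi : Integrable phi := by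
  have h : phi = fun z => (Real.sqrt (2 * Real.pi))⁻¹ * Real.exp (-(1/2) * z ^ 2) :=
    funext phi_eq
  rw [h]
  exact (integrable_exp_neg_mul_sq (by norm_num)).const_mul _

lemma integral_phi : ∫ z, phi z = 1 := by
  have h : phi = fun z => (Real.sqrt (2 * Real.pi))⁻¹ * Real.exp (-(1/2) * z ^ 2) :=
    funext phi_eq
  rw [h, integral_const_mul, integral_gaussian]
  have : Real.pi / (1/2) = 2 * Real.pi := by ring
  rw [this]
  exact inv_mul_cancel₀ (Real.sqrt_ne_zero'.2 (by positivity))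

lemma hasDerivAt_N (y : ℝ) : HasDerivAt N (phi y) y := by
  have key : N = fun y => N 0 + ∫ t in (0:ℝ)..y, phi t := by
    funext y
    have := intervalIntegral.integral_Iic_sub_Iic
      (integrable_phi.integrableOn (s := Iic 0)) (integrable_phi.integrableOn (s := Iic y))
    unfold N
    linarith [this]
  rw [key]
  exact (intervalIntegral.integral_hasDerivAt_right
    integrable_phi.intervalIntegrable
    (continuous_phi.stronglyMeasurableAtFilter _ _)
    continuous_phi.continuousAt).const_add _

lemma continuous_N : Continuous N :=
  continuous_iff_continuousAt.2 fun y => (hasDerivAt_N y).continuousAt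

lemma N_pos (y : ℝ) : 0 < N y := by
  unfold N
  rw [setIntegral_pos_iff_support_of_nonneg_ae
    (Filter.Eventually.of_forall fun z => (phi_pos z).le) integrable_phi.integrableOn]
  have : Function.support phi = Set.univ := by
    ext z; simp [Function.support, (phi_pos z).ne']
  rw [this, Set.univ_inter, Real.volume_Iic]
  exact ENNReal.zero_lt_top

lemma N_add_compl (y : ℝ) : N y + ∫ z in Set.Ioi y, phi z = 1 := by
  rw [show (1:ℝ) = ∫ z, phi z from integral_phi.symm]
  exact intervalIntegral.integral_Iic_add_Ioi integrable_phi.integrableOn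
    integrable_phi.integrableOn

lemma N_lt_one (y : ℝ) : N y < 1 := by
  have h2 : 0 < ∫ z in Set.Ioi y, phi z := by
    rw [setIntegral_pos_iff_support_of_nonneg_ae
      (Filter.Eventually.of_forall fun z => (phi_pos z).le) integrable_phi.integrableOn]
    have : Function.support phi = Set.univ := by
      ext z; simp [Function.support, (phi_pos z).ne']
    rw [this, Set.univ_inter, Real.volume_Ioi]
    exact ENNReal.zero_lt_top
  linarith [N_add_compl y]

lemma N_tendsto_atTop : Tendsto N atTop (𝓝 1) := by
  have key : ∀ y, N y = N 0 + ∫ t in (0:ℝ)..y, phi t := by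
    intro y
    have := intervalIntegral.integral_Iic_sub_Iic
      (integrable_phi.integrableOn (s := Iic 0)) (integrable_phi.integrableOn (s := Iic y))
    unfold N; linarith [this]
  have h1 : Tendsto (fun y => N 0 + ∫ t in (0:ℝ)..y, phi t) atTop
      (𝓝 (N 0 + ∫ t in Set.Ioi 0, phi t)) :=
    ((MeasureTheory.intervalIntegral_tendsto_integral_Ioi 0
      integrable_phi.integrableOn tendsto_id).const_add _)
  have h2 : N 0 + ∫ t in Set.Ioi 0, phi t = 1 := N_add_compl 0
  rw [h2] at h1
  exact h1.congr (fun y => (key y).symm)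

lemma N_tendsto_atBot : Tendsto N atBot (𝓝 0) := by
  have key : ∀ y, N y = N 0 - ∫ t in y..(0:ℝ), phi t := by
    intro y
    have := intervalIntegral.integral_Iic_sub_Iic
      (integrable_phi.integrableOn (s := Iic y)) (integrable_phi.integrableOn (s := Iic 0))
    unfold N; linarith [this]
  have h1 : Tendsto (fun y => N 0 - ∫ t in y..(0:ℝ), phi t) atBot
      (𝓝 (N 0 - ∫ t in Set.Iic 0, phi t)) :=
    (MeasureTheory.intervalIntegral_tendsto_integral_Iic 0
      integrable_phi.integrableOn tendsto_id).const_sub _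
  have h2 : N 0 - ∫ t in Set.Iic 0, phi t = 0 := by unfold N; ring
  rw [h2] at h1
  exact h1.congr (fun y => (key y).symm)

lemma hasDerivAt_phi (z : ℝ) : HasDerivAt phi (-z * phi z) z := by
  have h1 : HasDerivAt (fun z : ℝ => -z ^ 2 / 2) (-z) z := by
    have := ((hasDerivAt_pow 2 z).neg).div_const 2
    refine this.congr_deriv ?_; push_cast; ring
  have h2 := (h1.exp).const_mul (Real.sqrt (2 * Real.pi))⁻¹
  refine h2.congr_deriv ?_
  unfold phi; ring

def vega (t T x k σ : ℝ) : ℝ := Real.exp x * phi (d1 t T x k σ) * Real.sqrt (T - t)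

def dd1 (t T x k σ : ℝ) : ℝ :=
  Real.sqrt (T - t) / 2 - (x - k) / (σ ^ 2 * Real.sqrt (T - t))

def dd2 (t T x k σ : ℝ) : ℝ :=
  -(Real.sqrt (T - t) / 2) - (x - k) / (σ ^ 2 * Real.sqrt (T - t))

lemma sqrt_pos_of {t T : ℝ} (htT : t < T) : 0 < Real.sqrt (T - t) :=
  Real.sqrt_pos.2 (by linarith)

section deriv
variable {t T x k σ : ℝ}


lemma hasDerivAt_d1 (htT : t < T) (hσ : σ ≠ 0) :
    HasDerivAt (fun σ => d1 t T x k σ) (dd1 t T x k σ) σ := by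
  have hs := sqrt_pos_of htT
  set s := Real.sqrt (T - t)
  have h1 : HasDerivAt (fun σ : ℝ => σ * s) s σ := by simpa using (hasDerivAt_id σ).mul_const s
  have h2 : HasDerivAt (fun σ : ℝ => (x - k) / (σ * s))
      ((0 * (σ * s) - (x - k) * s) / (σ * s) ^ 2) σ :=
    (hasDerivAt_const σ (x - k)).div h1 (by positivity)
  have h3 : HasDerivAt (fun σ : ℝ => σ * s / 2) (s / 2) σ := h1.div_const 2
  refine (h2.add h3).congr_deriv ?_
  rw [show dd1 t T x k σ = s / 2 - (x - k) / (σ ^ 2 * s) from rfl]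
  field_simp
  ring

lemma hasDerivAt_d2 (htT : t < T) (hσ : σ ≠ 0) :
    HasDerivAt (fun σ => d2 t T x k σ) (dd2 t T x k σ) σ := by
  have hs := sqrt_pos_of htT
  set s := Real.sqrt (T - t)
  have h1 : HasDerivAt (fun σ : ℝ => σ * s) s σ := by simpa using (hasDerivAt_id σ).mul_const s
  have h2 : HasDerivAt (fun σ : ℝ => (x - k) / (σ * s))
      ((0 * (σ * s) - (x - k) * s) / (σ * s) ^ 2) σ :=
    (hasDerivAt_const σ (x - k)).div h1 (by positivity)
  have h3 : HasDerivAt (fun σ : ℝ => σ * s / 2) (s / 2) σ := h1.div_const 2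
  refine (h2.sub h3).congr_deriv ?_
  rw [show dd2 t T x k σ = -(s / 2) - (x - k) / (σ ^ 2 * s) from rfl]
  field_simp
  ring

lemma exp_phi_identity (htT : t < T) (hσ : σ ≠ 0) :
    Real.exp k * phi (d2 t T x k σ) = Real.exp x * phi (d1 t T x k σ) := by
  have hs := sqrt_pos_of htT
  unfold phi d1 d2
  set s := Real.sqrt (T - t)
  rw [show Real.exp k * ((Real.sqrt (2 * Real.pi))⁻¹ *
      Real.exp (-((x - k) / (σ * s) - σ * s / 2) ^ 2 / 2)) =
      (Real.sqrt (2 * Real.pi))⁻¹ *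
      Real.exp (k + -((x - k) / (σ * s) - σ * s / 2) ^ 2 / 2) from by
    rw [Real.exp_add]; ring]
  rw [show Real.exp x * ((Real.sqrt (2 * Real.pi))⁻¹ *
      Real.exp (-((x - k) / (σ * s) + σ * s / 2) ^ 2 / 2)) =
      (Real.sqrt (2 * Real.pi))⁻¹ *
      Real.exp (x + -((x - k) / (σ * s) + σ * s / 2) ^ 2 / 2) from by
    rw [Real.exp_add]; ring]
  congr 1
  field_simp
  ring

lemma vega_pos (htT : t < T) : 0 < vega t T x k σ := by
  have hs := sqrt_pos_of htT
  exact mul_pos (mul_pos (Real.exp_pos x) (phi_pos _)) hs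

lemma hasDerivAt_BS (htT : t < T) (hσ : 0 < σ) :
    HasDerivAt (fun σ => BS t T x k σ) (vega t T x k σ) σ := by
  have h1 : HasDerivAt (fun σ => N (d1 t T x k σ))
      (phi (d1 t T x k σ) * dd1 t T x k σ) σ :=
    (hasDerivAt_N _).comp σ (hasDerivAt_d1 htT hσ.ne')
  have h2 : HasDerivAt (fun σ => N (d2 t T x k σ))
      (phi (d2 t T x k σ) * dd2 t T x k σ) σ :=
    (hasDerivAt_N _).comp σ (hasDerivAt_d2 htT hσ.ne')
  have h := (h1.const_mul (Real.exp x)).sub (h2.const_mul (Real.exp k))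
  have : BS t T x k = fun σ =>
      Real.exp x * N (d1 t T x k σ) - Real.exp k * N (d2 t T x k σ) := rfl
  refine h.congr_deriv ?_
  have hid := exp_phi_identity (x := x) (k := k) (σ := σ) htT hσ.ne'
  rw [show Real.exp k * (phi (d2 t T x k σ) * dd2 t T x k σ) =
      Real.exp k * phi (d2 t T x k σ) * dd2 t T x k σ from by ring, hid]
  unfold vega dd1 dd2
  ring

lemma hasDerivAt_vega (htT : t < T) (hσ : σ ≠ 0) :
    HasDerivAt (fun σ => vega t T x k σ)
      (-(vega t T x k σ) * d1 t T x k σ * dd1 t T x k σ) σ := by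
  have h1 : HasDerivAt (fun σ => phi (d1 t T x k σ))
      (-(d1 t T x k σ) * phi (d1 t T x k σ) * dd1 t T x k σ) σ :=
    (hasDerivAt_phi _).comp σ (hasDerivAt_d1 htT hσ)
  have h := (h1.const_mul (Real.exp x)).mul_const (Real.sqrt (T - t))
  refine h.congr_deriv ?_
  unfold vega
  ring
end deriv

section limits
variable {t T x k : ℝ}

lemma d1_rewrite (t T x k σ : ℝ) :
    d1 t T x k σ = ((x - k) / Real.sqrt (T - t)) * σ⁻¹ + σ * Real.sqrt (T - t) / 2 := by
  unfold d1
  rw [div_mul_eq_div_div_swap, div_eq_mul_inv ((x-k)/Real.sqrt (T-t))]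

lemma d2_rewrite (t T x k σ : ℝ) :
    d2 t T x k σ = ((x - k) / Real.sqrt (T - t)) * σ⁻¹ - σ * Real.sqrt (T - t) / 2 := by
  unfold d2
  rw [div_mul_eq_div_div_swap, div_eq_mul_inv ((x-k)/Real.sqrt (T-t))]

lemma tendsto_BS_atTop (htT : t < T) :
    Tendsto (fun σ => BS t T x k σ) atTop (𝓝 (Real.exp x)) := by
  have hs := sqrt_pos_of htT
  set s := Real.sqrt (T - t)
  have hmul : Tendsto (fun σ : ℝ => σ * s / 2) atTop atTop :=
    (tendsto_id.atTop_mul_const hs).atTop_div_const (by norm_num)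
  have hinv : Tendsto (fun σ : ℝ => ((x - k) / s) * σ⁻¹) atTop (𝓝 0) := by
    simpa using (tendsto_inv_atTop_zero.const_mul ((x - k) / s))
  have hd1 : Tendsto (fun σ => d1 t T x k σ) atTop atTop := by
    simp only [d1_rewrite]
    exact Tendsto.add_atTop hinv hmul
  have hd2 : Tendsto (fun σ => d2 t T x k σ) atTop atBot := by
    simp only [d2_rewrite, sub_eq_add_neg]
    exact Tendsto.add_atBot hinv (tendsto_neg_atTop_atBot.comp hmul)
  have h1 : Tendsto (fun σ => N (d1 t T x k σ)) atTop (𝓝 1) := N_tendsto_atTop.comp hd1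
  have h2 : Tendsto (fun σ => N (d2 t T x k σ)) atTop (𝓝 0) := N_tendsto_atBot.comp hd2
  have := (h1.const_mul (Real.exp x)).sub (h2.const_mul (Real.exp k))
  simpa [BS] using this

lemma tendsto_BS_zero (htT : t < T) :
    Tendsto (fun σ => BS t T x k σ) (𝓝[>] 0)
      (𝓝 (max (Real.exp x - Real.exp k) 0)) := by
  have hs := sqrt_pos_of htT
  set s := Real.sqrt (T - t) with hs_def
  have hinvtop : Tendsto (fun σ : ℝ => σ⁻¹) (𝓝[>] 0) atTop := tendsto_inv_nhdsGT_zero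
  have hmul0 : Tendsto (fun σ : ℝ => σ * s / 2) (𝓝[>] 0) (𝓝 0) := by
    have : Tendsto (fun σ : ℝ => σ * s / 2) (𝓝 0) (𝓝 (0 * s / 2)) :=
      (((continuous_id (X := ℝ)).mul continuous_const).div_const 2).tendsto 0
    simpa using this.mono_left nhdsWithin_le_nhds
  rcases lt_trichotomy x k with hxk | hxk | hxk
  · -- x < k : everything tends to 0, max = 0
    have hmax : max (Real.exp x - Real.exp k) 0 = 0 :=
      max_eq_right (by simp [Real.exp_le_exp, hxk.le])
    have hcoef : (x - k) / s < 0 := div_neg_of_neg_of_pos (by linarith) hs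
    have hbot : Tendsto (fun σ : ℝ => ((x - k) / s) * σ⁻¹) (𝓝[>] 0) atBot :=
      hinvtop.const_mul_atTop_of_neg hcoef
    have hd1 : Tendsto (fun σ => d1 t T x k σ) (𝓝[>] 0) atBot := by
      simp only [d1_rewrite]
      exact Tendsto.atBot_add hbot hmul0
    have hd2 : Tendsto (fun σ => d2 t T x k σ) (𝓝[>] 0) atBot := by
      simp only [d2_rewrite, sub_eq_add_neg]
      exact Tendsto.atBot_add hbot (hmul0.neg)
    have h1 := N_tendsto_atBot.comp hd1
    have h2 := N_tendsto_atBot.comp hd2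
    have := (h1.const_mul (Real.exp x)).sub (h2.const_mul (Real.exp k))
    rw [hmax]
    simpa [BS] using this
  · -- x = k
    subst hxk
    have hmax : max (Real.exp x - Real.exp x) 0 = 0 := by simp
    have hd1 : Tendsto (fun σ => d1 t T x x σ) (𝓝[>] 0) (𝓝 0) := by
      simp only [d1_rewrite, sub_self, zero_div, zero_mul, zero_add]
      simpa using hmul0
    have hd2 : Tendsto (fun σ => d2 t T x x σ) (𝓝[>] 0) (𝓝 0) := by
      simp only [d2_rewrite, sub_self, zero_div, zero_mul, zero_sub]
      simpa using hmul0.neg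
    have h1 := (continuous_N.tendsto 0).comp hd1
    have h2 := (continuous_N.tendsto 0).comp hd2
    have := (h1.const_mul (Real.exp x)).sub (h2.const_mul (Real.exp x))
    rw [hmax]
    simpa [BS] using this
  · -- k < x
    have hmax : max (Real.exp x - Real.exp k) 0 = Real.exp x - Real.exp k :=
      max_eq_left (by simp [Real.exp_le_exp, hxk.le, sub_nonneg])
    have hcoef : 0 < (x - k) / s := div_pos (by linarith) hs
    have htop : Tendsto (fun σ : ℝ => ((x - k) / s) * σ⁻¹) (𝓝[>] 0) atTop :=
      hinvtop.const_mul_atTop hcoef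
    have hd1 : Tendsto (fun σ => d1 t T x k σ) (𝓝[>] 0) atTop := by
      simp only [d1_rewrite]
      exact Tendsto.atTop_add htop hmul0
    have hd2 : Tendsto (fun σ => d2 t T x k σ) (𝓝[>] 0) atTop := by
      simp only [d2_rewrite, sub_eq_add_neg]
      exact Tendsto.atTop_add htop (hmul0.neg)
    have h1 := N_tendsto_atTop.comp hd1
    have h2 := N_tendsto_atTop.comp hd2
    have := (h1.const_mul (Real.exp x)).sub (h2.const_mul (Real.exp k))
    rw [hmax]
    simpa [BS] using this
end limits

section main
variable {t T x k : ℝ}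

lemma strictMonoOn_BS (htT : t < T) :
    StrictMonoOn (fun σ => BS t T x k σ) (Set.Ioi 0) := by
  apply strictMonoOn_of_deriv_pos (convex_Ioi 0)
  · exact fun σ hσ => ((hasDerivAt_BS htT hσ).continuousAt).continuousWithinAt
  · intro σ hσ
    rw [interior_Ioi] at hσ
    rw [(hasDerivAt_BS htT hσ).deriv]
    exact vega_pos htT

lemma surj_BS (htT : t < T) {l : ℝ}
    (hl : l ∈ Set.Ioo (max (Real.exp x - Real.exp k) 0) (Real.exp x)) :
    ∃ σ ∈ Set.Ioi (0:ℝ), BS t T x k σ = l := by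
  have h1 : ∀ᶠ σ in atTop, l < BS t T x k σ :=
    (tendsto_BS_atTop htT).eventually (eventually_gt_nhds hl.2)
  have h2 : ∀ᶠ σ in 𝓝[>] (0:ℝ), BS t T x k σ < l :=
    (tendsto_BS_zero htT).eventually (eventually_lt_nhds hl.1)
  obtain ⟨a, hal, ha0⟩ := (h2.and self_mem_nhdsWithin).exists
  obtain ⟨b, hlb, hab⟩ := (h1.and (eventually_gt_atTop a)).exists
  have hcont : ContinuousOn (fun σ => BS t T x k σ) (Set.Icc a b) := by
    intro σ hσ
    exact ((hasDerivAt_BS htT (lt_of_lt_of_le ha0 hσ.1)).continuousAt).continuousWithinAt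
  have := intermediate_value_Ioo hab.le hcont
  obtain ⟨σ, hσmem, hσeq⟩ := this ⟨hal, hlb⟩
  exact ⟨σ, lt_trans ha0 hσmem.1, hσeq⟩

lemma mapsTo_BS (htT : t < T) {σ : ℝ} (hσ : 0 < σ) :
    BS t T x k σ ∈ Set.Ioo (max (Real.exp x - Real.exp k) 0) (Real.exp x) := by
  have hmono := strictMonoOn_BS (x := x) (k := k) htT
  constructor
  · have hσ2 : (0:ℝ) < σ / 2 := by linarith
    have hle : max (Real.exp x - Real.exp k) 0 ≤ BS t T x k (σ / 2) := by
      apply le_of_tendsto (tendsto_BS_zero htT)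
      filter_upwards [Ioo_mem_nhdsGT_of_mem (Set.mem_Ico.2 ⟨le_rfl, hσ2⟩)] with ξ hξ
      exact (hmono.monotoneOn) hξ.1 hσ2 hξ.2.le
    calc max (Real.exp x - Real.exp k) 0 ≤ BS t T x k (σ / 2) := hle
      _ < BS t T x k σ := hmono hσ2 hσ (by linarith)
  · have hlt : BS t T x k σ < BS t T x k (σ + 1) := hmono (Set.mem_Ioi.2 hσ) (Set.mem_Ioi.2 (by linarith)) (by linarith)
    have hle : BS t T x k (σ + 1) ≤ Real.exp x := by
      apply ge_of_tendsto (tendsto_BS_atTop htT)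
      filter_upwards [eventually_ge_atTop (σ + 1)] with ξ hξ
      exact (hmono.monotoneOn) (Set.mem_Ioi.2 (by linarith)) (Set.mem_Ioi.2 (by linarith)) hξ
    linarith
end main


theorem bsinv_second_derivative (t T x k l : ℝ) (htT : t < T)
    (hl : l ∈ Set.Ioo (max (Real.exp x - Real.exp k) 0) (Real.exp x)) :
    iteratedDeriv 2 (fun p => BSinv t T x k p) l =
      ((BSinv t T x k l) ^ 4 * (T - t) ^ 2 - 4 * (x - k) ^ 2) /
        (4 * (Real.exp x * phi (d1 t T x k (BSinv t T x k l)) * (T - t)) ^ 2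
          * (BSinv t T x k l) ^ 3) := by
  have hs := sqrt_pos_of htT
  set I := Set.Ioo (max (Real.exp x - Real.exp k) 0) (Real.exp x) with hI_def
  set Θ : ℝ → ℝ := fun p => BSinv t T x k p with hΘ_def
  have hΘeq : Θ = fun p => Function.invFunOn (BS t T x k) (Set.Ioi 0) p := rfl
  have hmono := strictMonoOn_BS (t := t) (T := T) (x := x) (k := k) htT
  have hinj : Set.InjOn (BS t T x k) (Set.Ioi 0) := hmono.injOn
  have hsurj : ∀ y ∈ I, ∃ σ ∈ Set.Ioi (0:ℝ), BS t T x k σ = y := fun y hy => surj_BS htT hy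
  have hΘmem : ∀ y ∈ I, Θ y ∈ Set.Ioi (0:ℝ) := fun y hy =>
    Function.invFunOn_mem (hsurj y hy)
  have hFΘ : ∀ y ∈ I, BS t T x k (Θ y) = y := fun y hy =>
    Function.invFunOn_eq (hsurj y hy)
  have hΘF : ∀ σ ∈ Set.Ioi (0:ℝ), Θ (BS t T x k σ) = σ := fun σ hσ =>
    hinj.leftInvOn_invFunOn hσ
  have himage : Θ '' I = Set.Ioi (0:ℝ) := by
    apply Set.Subset.antisymm
    · rintro _ ⟨y, hy, rfl⟩; exact hΘmem y hy
    · intro σ hσ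
      exact ⟨BS t T x k σ, mapsTo_BS htT hσ, hΘF σ hσ⟩
  have hΘmono : MonotoneOn Θ I := by
    intro y1 h1 y2 h2 h12
    by_contra hlt
    push_neg at hlt
    have hlt2 : y2 < y1 := by
      have h := hmono (hΘmem y2 h2) (hΘmem y1 h1) hlt
      simpa [hFΘ y1 h1, hFΘ y2 h2] using h
    exact absurd hlt2 (not_lt.2 h12)
  have hIopen : IsOpen I := isOpen_Ioo
  have hcont : ∀ y ∈ I, ContinuousAt Θ y := fun y hy =>
    continuousAt_of_monotoneOn_of_image_mem_nhds hΘmono (hIopen.mem_nhds hy)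
      (by rw [himage]; exact Ioi_mem_nhds (hΘmem y hy))
  have hΘderiv : ∀ y ∈ I, HasDerivAt Θ ((vega t T x k (Θ y))⁻¹) y := by
    intro y hy
    exact HasDerivAt.of_local_left_inverse (hcont y hy)
      (hasDerivAt_BS htT (hΘmem y hy)) (vega_pos htT).ne'
      (Filter.eventually_of_mem (hIopen.mem_nhds hy) (fun z hz => hFΘ z hz))
  -- reduce second iterated derivative
  conv_lhs => rw [show (2:ℕ) = 1 + 1 from rfl]
  rw [iteratedDeriv_succ, iteratedDeriv_one]
  have hev : deriv (fun p => BSinv t T x k p) =ᶠ[𝓝 l]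
      (fun y => (vega t T x k (Θ y))⁻¹) :=
    Filter.eventually_of_mem (hIopen.mem_nhds hl) (fun y hy => (hΘderiv y hy).deriv)
  rw [hev.deriv_eq]
  -- derivative of the composed function
  have hθ0 : (0:ℝ) < Θ l := hΘmem l hl
  have hvega' := hasDerivAt_vega (x := x) (k := k) htT hθ0.ne'
  have hcomp : HasDerivAt (fun y => vega t T x k (Θ y))
      ((-(vega t T x k (Θ l)) * d1 t T x k (Θ l) * dd1 t T x k (Θ l)) *
        (vega t T x k (Θ l))⁻¹) l :=
    hvega'.comp l (hΘderiv l hl)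
  have hg : HasDerivAt (fun y => (vega t T x k (Θ y))⁻¹)
      (-((-(vega t T x k (Θ l)) * d1 t T x k (Θ l) * dd1 t T x k (Θ l)) *
        (vega t T x k (Θ l))⁻¹) / (vega t T x k (Θ l)) ^ 2) l :=
    hcomp.inv (vega_pos htT).ne'
  rw [hg.deriv]
  -- final algebra
  have hθ : BSinv t T x k l = Θ l := rfl
  rw [hθ]
  unfold vega d1 dd1
  have hP : 0 < phi ((x - k) / (Θ l * Real.sqrt (T - t)) + Θ l * Real.sqrt (T - t) / 2) :=
    phi_pos _
  set P := phi ((x - k) / (Θ l * Real.sqrt (T - t)) + Θ l * Real.sqrt (T - t) / 2) with hP_def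
  set s := Real.sqrt (T - t) with hs_def
  rw [show T - t = s ^ 2 by rw [hs_def]; exact (Real.sq_sqrt (by linarith)).symm]
  have hA : Real.exp x ≠ 0 := (Real.exp_pos x).ne'
  have hθne : Θ l ≠ 0 := hθ0.ne'
  have hsne : s ≠ 0 := hs.ne'
  have hPne : P ≠ 0 := hP.ne'
  field_simp
  ring
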